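/- Let A be a root in F_{q^3} of h_1(X) = X^{q+1} + X + 1. Then A = (1/A^q) · (1/A^{q^2}), and both 1/A^q and 1/A^{q^2} are roots of h_2(X) = X^{q+1} + X^q + 1. -/

import Mathlib

theorem stmt_13 (q : ℕ) (hq : IsPrimePow q)
    (F : Type) [Field F] [Fintype F] (hcard : Fintype.card F = q ^ 3)
    (A : F) (hA : A ^ (q + 1) + A + 1 = 0) :
    A = (A ^ q)⁻¹ * (A ^ (q ^ 2))⁻¹ ∧
    ((A ^ q)⁻¹) ^ (q + 1) + ((A ^ q)⁻¹) ^ q + 1 = 0 ∧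
    ((A ^ (q ^ 2))⁻¹) ^ (q + 1) + ((A ^ (q ^ 2))⁻¹) ^ q + 1 = 0 := by
  obtain ⟨p, n, hp, hn, rfl⟩ := hq
  haveI : Fact p.Prime := ⟨hp.nat_prime⟩
  set q := p ^ n with hqdef
  haveI : CharP F p := by
    refine (CharP.charP_iff_prime_eq_zero hp.nat_prime).2 ?_
    have h0 := Nat.cast_card_eq_zero F
    rw [hcard, hqdef] at h0
    push_cast at h0
    exact pow_eq_zero_iff (n := n) hn.ne' |>.1
      (pow_eq_zero_iff (n := 3) three_ne_zero |>.1 h0)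
  have frob : ∀ x y : F, (x + y) ^ q = x ^ q + y ^ q := by
    intro x y
    rw [hqdef]
    exact add_pow_char_pow x y p n
  have hq0 : 0 < q := pow_pos hp.nat_prime.pos n
  have hA0 : A ≠ 0 := by
    rintro rfl
    rw [zero_pow (by omega)] at hA
    simp at hA
  set B := A ^ q with hB
  set C := A ^ (q ^ 2) with hC
  have hB0 : B ≠ 0 := pow_ne_zero _ hA0
  have hC0 : C ≠ 0 := pow_ne_zero _ hA0
  have hBq : B ^ q = C := by rw [hB, hC, ← pow_mul, sq]
  have hCq : C ^ q = A := by
    rw [hC, ← pow_mul, ← pow_succ, ← hcard]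
    exact FiniteField.pow_card A
  have eq2 : B ^ (q + 1) + B + 1 = 0 := by
    have := congrArg (· ^ q) hA
    simp only [frob, one_pow, zero_pow hq0.ne'] at this
    rw [← pow_mul, mul_comm, pow_mul] at this
    exact this
  have eq3 : C ^ (q + 1) + C + 1 = 0 := by
    have := congrArg (· ^ q) eq2
    simp only [frob, one_pow, zero_pow hq0.ne'] at this
    rw [← pow_mul, mul_comm, pow_mul, hBq] at this
    exact this
  have e2 : C * B + B + 1 = 0 := by
    rw [pow_succ, hBq] at eq2; exact eq2
  have e3 : A * C + C + 1 = 0 := by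
    rw [pow_succ, hCq] at eq3; exact eq3
  clear_value B C
  refine ⟨?_, ?_, ?_⟩
  · field_simp
    linear_combination B * e3 - e2
  · rw [inv_pow, inv_pow, pow_succ, hBq]
    field_simp
    linear_combination e2
  · rw [inv_pow, inv_pow, pow_succ, hCq]
    field_simp
    linear_combination e3
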